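/- arXiv:0704.0994 — 3 statements merged into one kernel-verified Lean document; each statement's English description precedes it below -/
import Mathlib

section
/- In a medium, a token cannot be a one-to-one (injective) function on the set of states. -/
variable {S : Type*}

/-- Result of applying message `m` (a list of tokens) to state `P`. -/
def mApply (m : List (S → S)) (P : S) : S := m.foldl (fun s τ => τ s) P

/-- `τ'` is a reverse of `τ`. -/
def IsReverse (τ τ' : S → S) : Prop := ∀ P Q : S, P ≠ Q → (τ P = Q ↔ τ' Q = P)

/-- `(S, T)` is a token system. -/
def IsTokenSystem (T : Set (S → S)) : Prop :=
  Nontrivial S ∧ T.Nonempty ∧ ∀ τ ∈ T, τ ≠ id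

/-- `m` is a message of the token system with token set `T`. -/
def IsMsg (T : Set (S → S)) (m : List (S → S)) : Prop := ∀ τ ∈ m, τ ∈ T

/-- `m` is stepwise effective for `P`. -/
def StepwiseEff : List (S → S) → S → Prop
  | [], _ => True
  | τ :: rest, P => τ P ≠ P ∧ StepwiseEff rest (τ P)

/-- `m` is consistent: it contains no token together with a reverse of it. -/
def Consistent (m : List (S → S)) : Prop :=
  ∀ τ ∈ m, ∀ τ' ∈ m, ¬ IsReverse τ τ'

/-- `m` is concise for `P`. -/
def Concise (T : Set (S → S)) (m : List (S → S)) (P : S) : Prop :=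
  IsMsg T m ∧ Consistent m ∧ StepwiseEff m P ∧ m.Nodup

/-- `m` is a return message for `P`. -/
def IsReturn (m : List (S → S)) (P : S) : Prop :=
  StepwiseEff m P ∧ mApply m P = P

/-- `m` is vacuous: its indices partition into pairs of mutually reverse tokens. -/
def Vacuous (m : List (S → S)) : Prop :=
  ∃ σ : Equiv.Perm (Fin m.length),
    (∀ i, σ i ≠ i) ∧ (∀ i, σ (σ i) = i) ∧
    ∀ i, IsReverse (m.get i) (m.get (σ i))

/-- `(S, T)` is a medium: token system satisfying [Ma] and [Mb]. -/
def IsMedium (T : Set (S → S)) : Prop :=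
  IsTokenSystem T ∧
  (∀ P Q : S, P ≠ Q → ∃ m, Concise T m P ∧ mApply m P = Q) ∧
  (∀ (m : List (S → S)) (P : S), IsMsg T m → IsReturn m P → Vacuous m)

/-- Content of a message: its set of tokens. -/
def msgContent (m : List (S → S)) : Set (S → S) := {τ | τ ∈ m}

/-- Token content of a state `P`. -/
def SContent (T : Set (S → S)) (P : S) : Set (S → S) :=
  {τ | ∃ (V : S) (m : List (S → S)), Concise T m V ∧ mApply m V = P ∧ τ ∈ m}

/-- `mr` is the reverse message `τ̃ₙ…τ̃₁` of `m = τ₁…τₙ`. -/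
def IsReverseOfMsg (m mr : List (S → S)) : Prop :=
  List.Forall₂ (fun τ τ' => IsReverse τ τ' ∧ IsReverse τ' τ) m mr.reverse

/-- If `a` is a reverse of `τ` and moves `Y`, then any reverse `b` of `τ` agrees with `a`
at `Y`. -/
lemma rev_agree {τ a b : S → S} (ha : IsReverse τ a) (hb : IsReverse τ b)
    (Y : S) (h : a Y ≠ Y) : b Y = a Y := by
  have hτ : τ (a Y) = Y := (ha (a Y) Y h).mpr rfl
  exact (hb (a Y) Y h).mp hτ

/-- Any two reverses of the same token are equal. -/
lemma reverse_unique {τ a b : S → S} (ha : IsReverse τ a) (hb : IsReverse τ b) : a = b := by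
  funext Y
  by_cases h1 : a Y = Y
  · by_cases h2 : b Y = Y
    · rw [h1, h2]
    · exact rev_agree hb ha Y h2
  · exact (rev_agree ha hb Y h1).symm

lemma get_cons_succ' (a : S → S) (m : List (S → S)) (w : ℕ)
    (h : w + 1 < (a :: m).length) :
    (a :: m).get ⟨w + 1, h⟩ = m.get ⟨w, by simpa using h⟩ := rfl

lemma get_cons_zero' (a : S → S) (m : List (S → S)) (h : 0 < (a :: m).length) :
    (a :: m).get ⟨0, h⟩ = a := rfl

/-- In a medium, no token is an injective function on the set of states. -/
theorem stmt1 {T : Set (S → S)} (hM : IsMedium T) :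
    ∀ τ ∈ T, ¬ Function.Injective τ := by
  rintro τ hτT hinj
  obtain ⟨⟨hnt, -, hTid⟩, hMa, hMb⟩ := hM
  have hτid : τ ≠ id := hTid τ hτT
  have hex : ∃ P, τ P ≠ P := by
    by_contra h
    push_neg at h
    exact hτid (funext h)
  obtain ⟨P, hP⟩ := hex
  have hQ : τ (τ P) ≠ τ P := by
    intro h
    exact hP (hinj h ▸ h)
  by_cases hR : τ (τ P) = P
  · -- Case τ (τ P) = P : first show IsReverse τ τ from the return message [τ, τ] at P
    obtain ⟨σ, hfix, hinv, hrev⟩ := hMb [τ, τ] P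
      (by intro a ha; simp only [List.mem_cons, List.not_mem_nil, or_false] at ha
          rcases ha with h | h <;> (subst h; exact hτT))
      ⟨⟨hP, hQ, trivial⟩, hR⟩
    have hττ : IsReverse τ τ := by
      have h2 : (σ ⟨0, by simp⟩).val < 2 := by simpa using (σ ⟨0, by simp⟩).isLt
      have h3 : (σ ⟨0, by simp⟩).val ≠ 0 := by
        intro h
        exact hfix ⟨0, by simp⟩ (by ext; simpa using h)
      have h0 : σ ⟨0, by simp⟩ = ⟨1, by simp⟩ := by
        ext; show (σ ⟨0, by simp⟩).val = 1; omega
      have := hrev ⟨0, by simp⟩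
      rw [h0] at this
      exact this
    -- now use a concise message m from P to τ P
    obtain ⟨m, ⟨hmsg, hcons, hstep, hnd⟩, happ⟩ := hMa P (τ P) (Ne.symm hP)
    -- τ :: m is a return message for τ P
    obtain ⟨σ', hfix', hinv', hrev'⟩ := hMb (τ :: m) (τ P)
      (by intro a ha
          rcases List.mem_cons.mp ha with h | h
          · subst h; exact hτT
          · exact hmsg a h)
      ⟨⟨hQ, by rw [hR]; exact hstep⟩, by show mApply m (τ (τ P)) = τ P; rw [hR]; exact happ⟩
    -- σ' pairs index 0 (token τ) with some index j+1 in m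
    have hlt : (σ' ⟨0, by simp⟩).val < m.length + 1 := by
      simpa using (σ' ⟨0, by simp⟩).isLt
    have hne0 : (σ' ⟨0, by simp⟩).val ≠ 0 := by
      intro h
      exact hfix' ⟨0, by simp⟩ (by ext; simpa using h)
    have hj : (σ' ⟨0, by simp⟩).val - 1 < m.length := by omega
    have hform : σ' ⟨0, by simp⟩ = ⟨((σ' ⟨0, by simp⟩).val - 1) + 1, by simpa using hj⟩ := by
      ext; show _ = (σ' ⟨0, by simp⟩).val - 1 + 1; omega
    have hrev0 : IsReverse τ (m.get ⟨(σ' ⟨0, by simp⟩).val - 1, hj⟩) := by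
      have h := hrev' ⟨0, by simp⟩
      rw [hform] at h
      exact h
    -- the token of m paired with τ is a reverse of τ, hence equals τ by uniqueness
    have heq : m.get ⟨(σ' ⟨0, by simp⟩).val - 1, hj⟩ = τ := reverse_unique hrev0 hττ
    have hmem : m.get ⟨(σ' ⟨0, by simp⟩).val - 1, hj⟩ ∈ m := List.get_mem m _
    exact hcons _ hmem _ hmem (heq ▸ hττ)
  · -- Case R := τ (τ P) ≠ P : take a concise message m from R to P
    obtain ⟨m, ⟨hmsg, hcons, hstep, hnd⟩, happ⟩ := hMa (τ (τ P)) P hR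
    obtain ⟨σ, hfix, hinv, hrev⟩ := hMb (τ :: τ :: m) P
      (by intro a ha
          rcases List.mem_cons.mp ha with h | h
          · subst h; exact hτT
          rcases List.mem_cons.mp h with h | h
          · subst h; exact hτT
          · exact hmsg a h)
      ⟨⟨hP, hQ, hstep⟩, happ⟩
    have hlt0 : (σ ⟨0, by simp⟩).val < m.length + 2 := by
      simpa using (σ ⟨0, by simp⟩).isLt
    have hne00 : (σ ⟨0, by simp⟩).val ≠ 0 := by
      intro h
      exact hfix ⟨0, by simp⟩ (by ext; simpa using h)
    by_cases h01 : (σ ⟨0, by simp⟩).val = 1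
    · -- the two copies of τ are paired together; so m pairs internally
      have hσ0 : σ ⟨0, by simp⟩ = ⟨1, by simp⟩ := by ext; exact h01
      have hσ1 : σ ⟨1, by simp⟩ = ⟨0, by simp⟩ := by
        have := hinv ⟨0, by simp⟩
        rw [hσ0] at this
        exact this
      match m, hcons, hstep, happ, σ, hfix, hinv, hrev, hσ0, hσ1 with
      | [], _, _, happ, _, _, _, _, _, _ => exact hR happ
      | a :: m', hcons, hstep, happ, σ, hfix, hinv, hrev, hσ0, hσ1 =>
        -- index 2 must be paired with another index ≥ 2, i.e. within m
        have hlt2 : (σ ⟨2, by simp⟩).val < m'.length + 3 := by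
          simpa using (σ ⟨2, by simp⟩).isLt
        have hne22 : (σ ⟨2, by simp⟩).val ≠ 2 := by
          intro h
          exact hfix ⟨2, by simp⟩ (by ext; exact h)
        have hne20 : (σ ⟨2, by simp⟩).val ≠ 0 := by
          intro h
          have h2 : σ ⟨2, by simp⟩ = ⟨0, by simp⟩ := by ext; exact h
          have := hinv ⟨2, by simp⟩
          rw [h2, hσ0] at this
          exact absurd (congrArg Fin.val this) (by simp)
        have hne21 : (σ ⟨2, by simp⟩).val ≠ 1 := by
          intro h
          have h2 : σ ⟨2, by simp⟩ = ⟨1, by simp⟩ := by ext; exact h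
          have := hinv ⟨2, by simp⟩
          rw [h2, hσ1] at this
          exact absurd (congrArg Fin.val this) (by simp)
        have hj : (σ ⟨2, by simp⟩).val - 2 < (a :: m').length := by simp; omega
        have hform : σ ⟨2, by simp⟩ = ⟨((σ ⟨2, by simp⟩).val - 2) + 1 + 1, by simpa using hj⟩ := by
          ext; show _ = (σ ⟨2, by simp⟩).val - 2 + 1 + 1; omega
        have hrev2 : IsReverse ((a :: m').get ⟨0, by simp⟩)
            ((a :: m').get ⟨(σ ⟨2, by simp⟩).val - 2, hj⟩) := by
          have h := hrev ⟨2, by simp⟩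
          rw [hform] at h
          exact h
        exact hcons _ (List.get_mem _ _) _ (List.get_mem _ _) hrev2
    · -- τ at index 0 and τ at index 1 pair with two distinct tokens of m,
      -- both reverses of τ — contradicting Nodup
      have hlt1 : (σ ⟨1, by simp⟩).val < m.length + 2 := by
        simpa using (σ ⟨1, by simp⟩).isLt
      have hne11 : (σ ⟨1, by simp⟩).val ≠ 1 := by
        intro h
        exact hfix ⟨1, by simp⟩ (by ext; exact h)
      have hne10 : (σ ⟨1, by simp⟩).val ≠ 0 := by
        intro h
        have h2 : σ ⟨1, by simp⟩ = ⟨0, by simp⟩ := by ext; exact h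
        have := hinv ⟨1, by simp⟩
        rw [h2] at this
        exact h01 (by rw [this])
      have hj : (σ ⟨0, by simp⟩).val - 2 < m.length := by omega
      have hk : (σ ⟨1, by simp⟩).val - 2 < m.length := by omega
      have hform0 : σ ⟨0, by simp⟩ = ⟨((σ ⟨0, by simp⟩).val - 2) + 1 + 1, by simpa using hj⟩ := by
        ext; show _ = (σ ⟨0, by simp⟩).val - 2 + 1 + 1; omega
      have hform1 : σ ⟨1, by simp⟩ = ⟨((σ ⟨1, by simp⟩).val - 2) + 1 + 1, by simpa using hk⟩ := by
        ext; show _ = (σ ⟨1, by simp⟩).val - 2 + 1 + 1; omega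
      have hrev0 : IsReverse τ (m.get ⟨(σ ⟨0, by simp⟩).val - 2, hj⟩) := by
        have h := hrev ⟨0, by simp⟩
        rw [hform0] at h
        exact h
      have hrev1 : IsReverse τ (m.get ⟨(σ ⟨1, by simp⟩).val - 2, hk⟩) := by
        have h := hrev ⟨1, by simp⟩
        rw [hform1] at h
        exact h
      have heq : m.get ⟨(σ ⟨0, by simp⟩).val - 2, hj⟩ = m.get ⟨(σ ⟨1, by simp⟩).val - 2, hk⟩ :=
        reverse_unique hrev0 hrev1
      have hne : (σ ⟨0, by simp⟩).val ≠ (σ ⟨1, by simp⟩).val := by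
        intro h
        have : σ ⟨0, by simp⟩ = σ ⟨1, by simp⟩ := by ext; exact h
        have := σ.injective this
        exact absurd (congrArg Fin.val this) (by simp)
      have := (hnd.get_inj_iff).mp heq
      have := congrArg Fin.val this
      simp only [] at this
      omega
end

section
/- In a medium, for any two adjacent states P and Q (i.e., Pτ = Q for some token τ with P ≠ Q), there is exactly one token producing Q from P. -/
variable {S : Type*}

/-- Auxiliary: reverse is symmetric. -/
lemma isReverse_symm {τ ρ : S → S} (h : IsReverse τ ρ) : IsReverse ρ τ := by
  intro A B hAB
  have := h B A (Ne.symm hAB)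
  tauto

/-- Auxiliary: a token is determined by any of its reverses. -/
lemma eq_of_isReverse {τ τ' ρ : S → S} (h : IsReverse τ ρ) (h' : IsReverse τ' ρ) :
    τ = τ' := by
  funext A
  by_cases h1 : τ A = A
  · by_cases h2 : τ' A = A
    · rw [h1, h2]
    · exfalso
      have hρ : ρ (τ' A) = A := ((h' A (τ' A) (Ne.symm h2)).mp rfl)
      have : τ A = τ' A := (h A (τ' A) (Ne.symm h2)).mpr hρ
      exact h2 (this ▸ h1.symm ▸ rfl)
  · have hρ : ρ (τ A) = A := (h A (τ A) (Ne.symm h1)).mp rfl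
    exact ((h' A (τ A) (Ne.symm h1)).mpr hρ).symm

/-- In a medium, for any two adjacent states there is exactly one token
producing one from the other. -/
theorem stmt2 {T : Set (S → S)} (hM : IsMedium T) (P Q : S) (hPQ : P ≠ Q)
    (hadj : ∃ τ ∈ T, τ P = Q) :
    ∃! τ, τ ∈ T ∧ τ P = Q := by
  obtain ⟨_, hMa, hMb⟩ := hM
  obtain ⟨m, ⟨hmsg, hcons, hse, hnd⟩, happ⟩ := hMa Q P (Ne.symm hPQ)
  -- Key claim: for any token τ ∈ T with τ P = Q, m = [ρ] and ρ is a reverse of τ.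
  have key : ∀ τ, τ ∈ T → τ P = Q → ∃ ρ, m = [ρ] ∧ IsReverse τ ρ := by
    intro τ hτT hτPQ
    have hmsg' : IsMsg T (τ :: m) := by
      intro x hx
      rcases List.mem_cons.mp hx with h | h
      · exact h ▸ hτT
      · exact hmsg x h
    have hret : IsReturn (τ :: m) P := by
      constructor
      · refine ⟨?_, ?_⟩
        · rw [hτPQ]; exact Ne.symm hPQ
        · rw [hτPQ]; exact hse
      · show mApply m (τ P) = P
        rw [hτPQ]; exact happ
    obtain ⟨σ, hσ1, hσ2, hσ3⟩ := hMb (τ :: m) P hmsg' hret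
    -- m is nonempty
    have hm0 : m.length ≠ 0 := by
      intro h
      rw [List.length_eq_zero_iff] at h
      subst h
      exact hPQ (happ.symm)
    -- entries of τ :: m at positive indices lie in m
    have hget : ∀ (k : Fin (τ :: m).length), (k : ℕ) ≠ 0 → (τ :: m).get k ∈ m := by
      rintro ⟨k, hk⟩ hk0
      match k with
      | 0 => exact absurd rfl hk0
      | Nat.succ j =>
        have : (τ :: m).get ⟨j + 1, hk⟩ = m.get ⟨j, by simpa using hk⟩ := rfl
        rw [this]
        exact List.get_mem m ⟨j, by simpa using hk⟩
    -- m has length 1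
    have hlen : m.length = 1 := by
      by_contra hne
      have h2 : 2 ≤ m.length := by omega
      have hlw : (τ :: m).length = m.length + 1 := rfl
      set i0 : Fin (τ :: m).length := ⟨0, by omega⟩ with hi0
      have hj : (σ i0 : ℕ) ≠ 0 := by
        intro h
        apply hσ1 i0
        apply Fin.ext
        rw [h, hi0]
      -- choose i among indices 1, 2 distinct from σ i0
      set i : Fin (τ :: m).length :=
        if (σ i0 : ℕ) = 1 then ⟨2, by omega⟩ else ⟨1, by omega⟩ with hi
      have hi0ne : (i : ℕ) ≠ 0 := by
        rw [hi]; split <;> simp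
      have hine : i ≠ σ i0 := by
        rw [hi]
        split
        · intro h
          rename_i hh
          have : (σ i0 : ℕ) = 2 := by rw [← h]
          omega
        · intro h
          rename_i hh
          exact hh (by rw [← h])
      have hσi : (σ i : ℕ) ≠ 0 := by
        intro h
        have : σ i = i0 := Fin.ext (by rw [h, hi0])
        have : i = σ i0 := by rw [← this, hσ2]
        exact hine this
      exact hcons _ (hget i hi0ne) _ (hget (σ i) hσi) (hσ3 i)
    obtain ⟨ρ, hm⟩ := List.length_eq_one_iff.mp hlen
    refine ⟨ρ, hm, ?_⟩
    subst hm
    -- now σ : Perm (Fin 2) essentially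
    have h0 : ((σ ⟨0, by norm_num⟩ : Fin (τ :: [ρ]).length) : ℕ) = 1 := by
      have h1 := hσ1 ⟨0, by norm_num⟩
      have : ((σ ⟨0, by norm_num⟩ : Fin (τ :: [ρ]).length) : ℕ) < 2 :=
        (σ ⟨0, by norm_num⟩).isLt
      have hne0 : ((σ ⟨0, by norm_num⟩ : Fin (τ :: [ρ]).length) : ℕ) ≠ 0 := by
        intro h
        exact h1 (Fin.ext (by simpa using h))
      omega
    have := hσ3 ⟨0, by norm_num⟩
    have hσ0 : (σ ⟨0, by norm_num⟩ : Fin (τ :: [ρ]).length) = ⟨1, by norm_num⟩ :=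
      Fin.ext (by simpa using h0)
    rw [hσ0] at this
    exact this
  obtain ⟨τ₀, hτ₀T, hτ₀⟩ := hadj
  refine ⟨τ₀, ⟨hτ₀T, hτ₀⟩, ?_⟩
  rintro τ' ⟨hτ'T, hτ'⟩
  obtain ⟨ρ, hm, hrev⟩ := key τ₀ hτ₀T hτ₀
  obtain ⟨ρ', hm', hrev'⟩ := key τ' hτ'T hτ'
  have : ρ = ρ' := by
    rw [hm] at hm'
    exact (List.cons.injEq _ _ _ _ ▸ hm').1.symm ▸ rfl
  subst this
  exact eq_of_isReverse hrev' hrev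
end

section
/- In a medium, for every token τ and every state P, exactly one of τ and its reverse τ̃ belongs to the token content of P. -/
variable {S : Type*}

/-! ### Auxiliary lemmas -/

theorem rev_symm {τ τ' : S → S} (h : IsReverse τ τ') : IsReverse τ' τ :=
  fun P Q hne => ((h Q P hne.symm)).symm

theorem rev_unique {τ x y : S → S} (hx : IsReverse τ x) (hy : IsReverse τ y) : x = y := by
  funext R
  by_cases h : ∃ Pp, Pp ≠ R ∧ τ Pp = R
  · obtain ⟨Pp, hne, hP⟩ := h
    rw [(hx Pp R hne).mp hP, (hy Pp R hne).mp hP]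
  · push_neg at h
    have hxR : x R = R := by
      by_contra hne
      exact h (x R) (hne) ((hx (x R) R (hne : x R ≠ R)).mpr rfl)
    have hyR : y R = R := by
      by_contra hne
      exact h (y R) (hne) ((hy (y R) R (hne : y R ≠ R)).mpr rfl)
    rw [hxR, hyR]

theorem mApply_nil (P : S) : mApply [] P = P := rfl

theorem mApply_cons (t : S → S) (m : List (S → S)) (P : S) :
    mApply (t :: m) P = mApply m (t P) := rfl

theorem mApply_append (m n : List (S → S)) (P : S) :
    mApply (m ++ n) P = mApply n (mApply m P) := by
  simp [mApply, List.foldl_append]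

theorem stepwise_append {m n : List (S → S)} {P : S} :
    StepwiseEff (m ++ n) P ↔ StepwiseEff m P ∧ StepwiseEff n (mApply m P) := by
  induction m generalizing P with
  | nil => simp [StepwiseEff, mApply]
  | cons t rest ih =>
      simp only [List.cons_append, StepwiseEff, List.append_eq, ih, mApply, List.foldl_cons,
        and_assoc]

theorem count_eq_card_aux {α : Type*} [DecidableEq α] (n : ℕ) (f : Fin n → α) (a : α) :
    (Finset.univ.filter fun i => f i = a).card = (List.ofFn f).count a := by
  induction n with
  | zero => simp
  | succ n ih =>
    rw [Finset.card_filter, Fin.sum_univ_succ, List.ofFn_succ, List.count_cons, ← ih,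
      Finset.card_filter, add_comm]
    simp only [Function.comp, beq_iff_eq]

theorem count_eq_card {α : Type*} [DecidableEq α] (l : List α) (a : α) :
    (Finset.univ.filter fun i : Fin l.length => l.get i = a).card = l.count a := by
  have := count_eq_card_aux l.length l.get a
  rwa [List.ofFn_get] at this

theorem vacuous_count [DecidableEq (S → S)] {r : List (S → S)} (hvac : Vacuous r)
    {a b : S → S} (hab : IsReverse a b) : r.count a = r.count b := by
  obtain ⟨σ, -, h2, h3⟩ := hvac
  rw [← count_eq_card r a, ← count_eq_card r b]
  refine Finset.card_bij' (fun i _ => σ i) (fun i _ => σ i) ?_ ?_ ?_ ?_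
  · intro i hi
    rw [Finset.mem_filter] at hi ⊢
    refine ⟨Finset.mem_univ _, ?_⟩
    have := h3 i
    rw [hi.2] at this
    exact rev_unique this hab
  · intro j hj
    rw [Finset.mem_filter] at hj ⊢
    refine ⟨Finset.mem_univ _, ?_⟩
    have := h3 j
    rw [hj.2] at this
    exact rev_unique this (rev_symm hab)
  · intro i _; exact h2 i
  · intro i _; exact h2 i

theorem forall₂_mem_right {α β : Type*} {R : α → β → Prop} {l₁ : List α} {l₂ : List β}
    (h : List.Forall₂ R l₁ l₂) {x : β} (hx : x ∈ l₂) : ∃ y ∈ l₁, R y x := by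
  rw [List.forall₂_iff_get] at h
  obtain ⟨i, hi⟩ := List.mem_iff_get.mp hx
  obtain ⟨hlen, hget⟩ := h
  refine ⟨l₁.get ⟨i, by omega⟩, List.get_mem _ _, ?_⟩
  have := hget i (by omega) i.isLt
  rwa [hi] at this

theorem forall₂_mem_left {α β : Type*} {R : α → β → Prop} {l₁ : List α} {l₂ : List β}
    (h : List.Forall₂ R l₁ l₂) {y : α} (hy : y ∈ l₁) : ∃ x ∈ l₂, R y x := by
  rw [List.forall₂_iff_get] at h
  obtain ⟨i, hi⟩ := List.mem_iff_get.mp hy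
  obtain ⟨hlen, hget⟩ := h
  refine ⟨l₂.get ⟨i, by omega⟩, List.get_mem _ _, ?_⟩
  have := hget i i.isLt (by omega)
  rwa [hi] at this

theorem get_cons_mem_tail {α : Type*} (a : α) (m : List α) (i : Fin (a :: m).length)
    (h : i.val ≠ 0) : (a :: m).get i ∈ m := by
  obtain ⟨iv, hlt⟩ := i
  cases iv with
  | zero => exact absurd rfl h
  | succ k =>
    have heq : (a :: m).get ⟨k + 1, hlt⟩ = m.get ⟨k, by simpa using hlt⟩ := rfl
    rw [heq]
    exact List.get_mem _ _

/-- Core construction: any token has, on the other side of a return message,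
a reverse that lies inside a consistent message not containing `τ`. -/
theorem medium_core {T : Set (S → S)} (hM : IsMedium T) {τ : S → S} (hτ : τ ∈ T) :
    ∃ (τ' : S → S) (m : List (S → S)),
      τ' ∈ m ∧ Consistent m ∧ IsMsg T m ∧ IsReverse τ τ' := by
  obtain ⟨hts, hMa, hMb⟩ := hM
  have hid : τ ≠ id := hts.2.2 τ hτ
  have hQ : ∃ Q : S, τ Q ≠ Q := by
    by_contra h
    push_neg at h
    exact hid (funext h)
  obtain ⟨Q, hQ⟩ := hQ
  obtain ⟨m, hmC, hmapp⟩ := hMa (τ Q) Q hQ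
  have hmsg : IsMsg T (τ :: m) := by
    intro x hx
    rcases List.mem_cons.mp hx with h | h
    · rwa [h]
    · exact hmC.1 x h
  have hret : IsReturn (τ :: m) Q := by
    constructor
    · exact ⟨hQ, hmC.2.2.1⟩
    · rw [mApply_cons, hmapp]
  obtain ⟨σ, h1, h2, h3⟩ := hMb (τ :: m) Q hmsg hret
  set i0 : Fin (τ :: m).length := ⟨0, Nat.succ_pos _⟩ with hi0
  have hjne : (σ i0).val ≠ 0 := fun h => h1 i0 (Fin.ext h)
  have hmem' : (τ :: m).get (σ i0) ∈ m := get_cons_mem_tail τ m (σ i0) hjne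
  have hrev' : IsReverse τ ((τ :: m).get (σ i0)) := h3 i0
  exact ⟨(τ :: m).get (σ i0), m, hmem', hmC.2.1, hmC.1, hrev'⟩

theorem medium_rev_mem {T : Set (S → S)} (hM : IsMedium T) {τ : S → S} (hτ : τ ∈ T) :
    ∃ τ', τ' ∈ T ∧ IsReverse τ τ' := by
  obtain ⟨τ', m, hmem, _, hmsg, hrev⟩ := medium_core hM hτ
  exact ⟨τ', hmsg τ' hmem, hrev⟩

theorem medium_not_selfrev {T : Set (S → S)} (hM : IsMedium T) {τ : S → S} (hτ : τ ∈ T) :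
    ¬ IsReverse τ τ := by
  intro hself
  obtain ⟨τ', m, hmem, hcons, _, hrev⟩ := medium_core hM hτ
  have : τ' = τ := rev_unique hrev hself
  rw [this] at hmem hrev
  exact hcons τ hmem τ hmem hrev

/-- Existence of reverse messages in a medium. -/
theorem exists_rev_msg {T : Set (S → S)} (hM : IsMedium T) :
    ∀ (n : List (S → S)) (W : S), IsMsg T n → StepwiseEff n W →
      ∃ nr : List (S → S), IsMsg T nr ∧ StepwiseEff nr (mApply n W) ∧
        mApply nr (mApply n W) = W ∧ List.Forall₂ IsReverse n nr.reverse := by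
  intro n
  induction n with
  | nil =>
    intro W _ _
    exact ⟨[], fun x hx => absurd hx (List.not_mem_nil), trivial, rfl, List.Forall₂.nil⟩
  | cons t rest ih =>
    intro W hmsg hsw
    obtain ⟨htW, hswrest⟩ := hsw
    obtain ⟨t', ht'T, hrevtt'⟩ := medium_rev_mem hM (hmsg t (List.mem_cons_self))
    obtain ⟨restr, hrmsg, hrsw, hrapp, hrfa⟩ :=
      ih (t W) (fun x hx => hmsg x (List.mem_cons_of_mem t hx)) hswrest
    have ht'tW : t' (t W) = W := (hrevtt' W (t W) (Ne.symm htW)).mp rfl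
    refine ⟨restr ++ [t'], ?_, ?_, ?_, ?_⟩
    · intro x hx
      rcases List.mem_append.mp hx with h | h
      · exact hrmsg x h
      · rw [List.mem_singleton.mp h]; exact ht'T
    · rw [mApply_cons, stepwise_append]
      refine ⟨hrsw, ?_⟩
      rw [hrapp]
      exact ⟨by rw [ht'tW]; exact Ne.symm htW, trivial⟩
    · rw [mApply_cons, mApply_append, hrapp, mApply_cons, mApply_nil, ht'tW]
    · rw [List.reverse_append, List.reverse_singleton, List.singleton_append]
      exact List.Forall₂.cons hrevtt' hrfa

/-- No state's content contains both a token and its reverse. -/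
theorem not_both {T : Set (S → S)} (hM : IsMedium T) {τ τ' : S → S}
    (hτ : τ ∈ T) (hrev : IsReverse τ τ') (P : S) :
    ¬ (τ ∈ SContent T P ∧ τ' ∈ SContent T P) := by
  classical
  rintro ⟨⟨V, m, hmC, hmP, hτm⟩, ⟨W, n, hnC, hnP, hτ'n⟩⟩
  -- reverse message of n : from P back to W
  obtain ⟨nr, hnrmsg, hnrsw, hnrapp, hnrfa⟩ := exists_rev_msg hM n W hnC.1 hnC.2.2.1
  rw [hnP] at hnrsw hnrapp
  -- connecting message p : from W to V
  obtain ⟨p, hpmsg, hpcons, hpsw, hpnd, hpapp⟩ :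
      ∃ p : List (S → S), IsMsg T p ∧ Consistent p ∧ StepwiseEff p W ∧ p.Nodup ∧
        mApply p W = V := by
    by_cases hWV : W = V
    · exact ⟨[], fun x hx => absurd hx (List.not_mem_nil), fun x hx => absurd hx
        (List.not_mem_nil), trivial, List.nodup_nil, by rw [mApply_nil, hWV]⟩
    · obtain ⟨p, hpC, hpapp⟩ := hM.2.1 W V hWV
      exact ⟨p, hpC.1, hpC.2.1, hpC.2.2.1, hpC.2.2.2, hpapp⟩
  set r : List (S → S) := m ++ (nr ++ p) with hr
  have hmsg : IsMsg T r := by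
    intro x hx
    rcases List.mem_append.mp hx with h | h
    · exact hmC.1 x h
    · rcases List.mem_append.mp h with h | h
      · exact hnrmsg x h
      · exact hpmsg x h
  have hret : IsReturn r V := by
    constructor
    · rw [hr, stepwise_append]
      refine ⟨hmC.2.2.1, ?_⟩
      rw [hmP, stepwise_append]
      exact ⟨hnrsw, by rw [hnrapp]; exact hpsw⟩
    · rw [hr, mApply_append, hmP, mApply_append, hnrapp, hpapp]
  have hvac := hM.2.2 r V hmsg hret
  have hcount := vacuous_count hvac hrev
  -- τ occurs at least twice in r
  have hτnr : τ ∈ nr := by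
    obtain ⟨x, hx, hrx⟩ := forall₂_mem_left hnrfa hτ'n
    have : x = τ := rev_unique hrx (rev_symm hrev)
    rw [this] at hx
    exact List.mem_reverse.mp hx
  have hτ'm : τ' ∉ m := fun h => hmC.2.1 τ hτm τ' h hrev
  have hτ'nr : τ' ∉ nr := by
    intro h
    obtain ⟨y, hy, hry⟩ := forall₂_mem_right hnrfa (List.mem_reverse.mpr h)
    have : y = τ := rev_unique (rev_symm hry) (rev_symm hrev)
    rw [this] at hy
    exact hnC.2.1 τ hy τ' hτ'n hrev
  have h1 : 1 ≤ m.count τ := List.count_pos_iff.mpr hτm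
  have h2 : 1 ≤ nr.count τ := List.count_pos_iff.mpr hτnr
  have h3 : m.count τ' = 0 := List.count_eq_zero.mpr hτ'm
  have h4 : nr.count τ' = 0 := List.count_eq_zero.mpr hτ'nr
  have h5 : p.count τ' ≤ 1 := List.nodup_iff_count_le_one.mp hpnd τ'
  rw [hr, List.count_append, List.count_append, List.count_append, List.count_append] at hcount
  omega

/-- At least one of a token and its reverse is in the content of every state. -/
theorem at_least {T : Set (S → S)} (hM : IsMedium T) {τ τ' : S → S}
    (hτ : τ ∈ T) (hτ' : τ' ∈ T) (hrev : IsReverse τ τ') (P : S) :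
    τ ∈ SContent T P ∨ τ' ∈ SContent T P := by
  classical
  have hself : ¬ IsReverse τ τ := medium_not_selfrev hM hτ
  have hself' : ¬ IsReverse τ' τ' := medium_not_selfrev hM hτ'
  have hne : τ ≠ τ' := by
    intro h
    rw [h] at hrev
    exact hself' hrev
  by_cases hA : τ P = P
  · by_cases hB : τ' P = P
    · -- both fixed: use [Mb] twice
      obtain ⟨Q, hQ⟩ : ∃ Q : S, τ Q ≠ Q := by
        by_contra h
        push_neg at h
        exact hM.1.2.2 τ hτ (funext h)
      have hPQ : P ≠ Q := fun h => hQ (h ▸ hA)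
      have hτ'R : τ' (τ Q) = Q := (hrev Q (τ Q) (Ne.symm hQ)).mp rfl
      have hPR : τ Q ≠ P := by
        intro h
        rw [h, hB] at hτ'R
        exact hPQ hτ'R
      obtain ⟨m, hmC, hmapp⟩ := hM.2.1 P Q hPQ
      obtain ⟨n, hnC, hnapp⟩ := hM.2.1 (τ Q) P hPR
      set r : List (S → S) := m ++ (τ :: n) with hrr
      have hmsg : IsMsg T r := by
        intro x hx
        rcases List.mem_append.mp hx with h | h
        · exact hmC.1 x h
        · rcases List.mem_cons.mp h with h | h
          · rwa [h]
          · exact hnC.1 x h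
      have hret : IsReturn r P := by
        constructor
        · rw [hrr, stepwise_append, hmapp]
          exact ⟨hmC.2.2.1, hQ, hnC.2.2.1⟩
        · rw [hrr, mApply_append, hmapp, mApply_cons, hnapp]
      have hvac := hM.2.2 r P hmsg hret
      have hcount := vacuous_count hvac hrev
      have hτr : τ ∈ r := List.mem_append.mpr (Or.inr (List.mem_cons_self))
      have hτ'r : τ' ∈ r := by
        rw [← List.count_pos_iff] at hτr ⊢
        omega
      rcases List.mem_append.mp hτ'r with h | h
      · -- τ' ∈ m, a concise message from P; flip it around via another return
        obtain ⟨p, hpC, hpapp⟩ := hM.2.1 Q P (Ne.symm hPQ)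
        set r2 : List (S → S) := m ++ p with hr2
        have hmsg2 : IsMsg T r2 := by
          intro x hx
          rcases List.mem_append.mp hx with h' | h'
          · exact hmC.1 x h'
          · exact hpC.1 x h'
        have hret2 : IsReturn r2 P := by
          constructor
          · rw [hr2, stepwise_append, hmapp]
            exact ⟨hmC.2.2.1, hpC.2.2.1⟩
          · rw [hr2, mApply_append, hmapp, hpapp]
        have hcount2 := vacuous_count (hM.2.2 r2 P hmsg2 hret2) hrev
        have hτ'r2 : τ' ∈ r2 := List.mem_append.mpr (Or.inl h)
        have hτr2 : τ ∈ r2 := by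
          rw [← List.count_pos_iff] at hτ'r2 ⊢
          omega
        rcases List.mem_append.mp hτr2 with h' | h'
        · exact absurd hrev (hmC.2.1 τ h' τ' h)
        · exact Or.inl ⟨Q, p, hpC, hpapp, h'⟩
      · rcases List.mem_cons.mp h with h | h
        · exact absurd h hne.symm
        · exact Or.inr ⟨τ Q, n, hnC, hnapp, h⟩
    · -- τ' P ≠ P : the one-token message [τ] from τ' P produces P
      have hτP : τ (τ' P) = P := ((rev_symm hrev) P (τ' P) (Ne.symm hB)).mp rfl
      refine Or.inl ⟨τ' P, [τ], ⟨?_, ?_, ?_, List.nodup_singleton τ⟩, ?_, List.mem_singleton_self τ⟩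
      · intro x hx; rw [List.mem_singleton.mp hx]; exact hτ
      · intro x hx y hy
        rw [List.mem_singleton.mp hx, List.mem_singleton.mp hy]
        exact hself
      · exact ⟨by rw [hτP]; exact Ne.symm hB, trivial⟩
      · rw [mApply_cons, mApply_nil, hτP]
  · -- τ P ≠ P : the one-token message [τ'] from τ P produces P
    have hτ'P : τ' (τ P) = P := (hrev P (τ P) (Ne.symm hA)).mp rfl
    refine Or.inr ⟨τ P, [τ'], ⟨?_, ?_, ?_, List.nodup_singleton τ'⟩, ?_, List.mem_singleton_self τ'⟩
    · intro x hx; rw [List.mem_singleton.mp hx]; exact hτ'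
    · intro x hx y hy
      rw [List.mem_singleton.mp hx, List.mem_singleton.mp hy]
      exact hself'
    · exact ⟨by rw [hτ'P]; exact Ne.symm hA, trivial⟩
    · rw [mApply_cons, mApply_nil, hτ'P]


/-- In a medium, for every token `τ` with reverse `τ'` and every state `P`,
exactly one of `τ`, `τ'` belongs to the token content of `P`. -/
theorem stmt5 {T : Set (S → S)} (hM : IsMedium T)
    (τ τ' : S → S) (hτ : τ ∈ T) (hτ' : τ' ∈ T) (hrev : IsReverse τ τ') (P : S) :
    Xor' (τ ∈ SContent T P) (τ' ∈ SContent T P) := by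
  have hnb := not_both hM hτ hrev P
  rcases at_least hM hτ hτ' hrev P with h | h
  · exact Or.inl ⟨h, fun h' => hnb ⟨h, h'⟩⟩
  · exact Or.inr ⟨h, fun h' => hnb ⟨h', h⟩⟩
end
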